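/- Let m ≥ 1 and λ ∈ ℂ with |λ+1| > √(m+1). Then the polynomial p(z) = z^m + z^{m−1} + ... + z − λ is a cyclic vector for the semigroup (W_n): the closed linear span of {W_n p : n ≥ 1} equals H². -/

import Mathlib

open scoped InnerProductSpace
open Filter ContinuousLinearMap

noncomputable section

/-- The Hardy space `H²` identified with `ℓ²(ℕ)` via Maclaurin coefficients. -/
abbrev H2 := lp (fun _ : ℕ => ℂ) 2

/-- `W` is the weighted composition operator `W_n f(z) = (1+z+⋯+z^{n-1}) f(z^n)`,
expressed in Maclaurin coefficients: `(W_n f)^(nk+j) = f^(k)` for `0 ≤ j ≤ n-1`. -/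
def IsWn (n : ℕ) (W : H2 →L[ℂ] H2) : Prop :=
  ∀ (f : H2) (k j : ℕ), j < n → (W f) (n * k + j) = f k

/-- For `m ≥ 1` and `|λ+1| > √(m+1)`, the polynomial `p(z) = z^m + ⋯ + z - λ` is a
cyclic vector for the semigroup `(W_n)`. -/
theorem poly_cyclic (m : ℕ) (hm : 1 ≤ m) (lam : ℂ)
    (hlam : Real.sqrt (m + 1) < ‖lam + 1‖)
    (W : ℕ → (H2 →L[ℂ] H2)) (hW : ∀ n, 1 ≤ n → IsWn n (W n)) :
    (Submodule.span ℂ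
        {x : H2 | ∃ n : ℕ, 1 ≤ n ∧
          x = W n ((∑ j ∈ Finset.Icc 1 m, lp.single 2 j (1 : ℂ))
                    - lam • lp.single 2 0 (1 : ℂ))}).topologicalClosure = ⊤ := by
  rw [Submodule.topologicalClosure_eq_top_iff, Submodule.eq_bot_iff]
  intro g hg
  set p : H2 := (∑ j ∈ Finset.Icc 1 m, lp.single 2 j (1 : ℂ)) - lam • lp.single 2 0 (1 : ℂ)
    with hpdef
  set c : ℕ → ℂ := fun k => if k = 0 then -lam else if k ≤ m then 1 else 0 with hcdef
  -- coordinates of p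
  have hpk : ∀ k, (p : ∀ _, ℂ) k = c k := by
    intro k
    simp only [hpdef, lp.coeFn_sub, Pi.sub_apply, lp.coeFn_smul, Pi.smul_apply,
      lp.coeFn_sum, Finset.sum_apply, lp.single_apply, Finset.sum_dite_eq,
      Finset.mem_Icc, smul_eq_mul]
    rcases eq_or_ne k 0 with rfl | hk
    · simp [hcdef]
    · have h1 : 1 ≤ k := Nat.one_le_iff_ne_zero.mpr hk
      by_cases hkm : k ≤ m
      · simp [hcdef, h1, hkm, hk]
      · simp [hcdef, hkm, hk]
  -- coordinates of W n p
  have hWp : ∀ n, 1 ≤ n → ∀ i, ((W n p : H2) : ∀ _, ℂ) i = c (i / n) := by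
    intro n hn i
    have hmod : n * (i / n) + i % n = i := Nat.div_add_mod i n
    have := hW n hn p (i / n) (i % n) (Nat.mod_lt i hn)
    rw [hmod] at this
    rw [this, hpk]
  -- W n p as a finite sum of singles
  have hWps : ∀ n, 1 ≤ n → (W n p : H2)
      = ∑ i ∈ Finset.range ((m + 1) * n), lp.single 2 i (c (i / n)) := by
    intro n hn
    apply lp.ext; funext i
    rw [hWp n hn i]
    simp only [lp.coeFn_sum, Finset.sum_apply, lp.single_apply, Finset.sum_dite_eq,
      Finset.mem_range, Pi.single_apply, Finset.sum_ite_eq]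
    split
    · rfl
    · rename_i h
      push_neg at h
      have h2 : m + 1 ≤ i / n := (Nat.le_div_iff_mul_le hn).mpr h
      have h3 : i / n ≠ 0 := by omega
      have h4 : ¬ i / n ≤ m := by omega
      simp [hcdef, h3, h4]
  -- partial sums of g
  set G : ℕ → ℂ := fun n => ∑ i ∈ Finset.range n, g i with hGdef
  set μ : ℂ := (starRingEnd ℂ) lam + 1 with hμdef
  have hμabs : ‖μ‖ = ‖lam + 1‖ := by
    rw [hμdef, show (starRingEnd ℂ) lam + 1 = (starRingEnd ℂ) (lam + 1) by simp,
      Complex.norm_conj]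
  have hμpos : 0 < ‖μ‖ := lt_of_le_of_lt (Real.sqrt_nonneg _) (hμabs ▸ hlam)
  -- the key functional equation
  have key : ∀ n, 1 ≤ n → G ((m + 1) * n) = μ * G n := by
    intro n hn
    have hmem : (W n p : H2) ∈ Submodule.span ℂ
        {x : H2 | ∃ n : ℕ, 1 ≤ n ∧
          x = W n ((∑ j ∈ Finset.Icc 1 m, lp.single 2 j (1 : ℂ))
                    - lam • lp.single 2 0 (1 : ℂ))} :=
      Submodule.subset_span ⟨n, hn, rfl⟩
    have h0 : ⟪(W n p : H2), g⟫_ℂ = 0 := (Submodule.mem_orthogonal _ g).mp hg _ hmem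
    rw [hWps n hn, sum_inner] at h0
    simp only [lp.inner_single_left, RCLike.inner_apply'] at h0
    have hsplit : ∑ i ∈ Finset.range n, (starRingEnd ℂ) (c (i / n)) * g i
        + ∑ i ∈ Finset.Ico n ((m + 1) * n), (starRingEnd ℂ) (c (i / n)) * g i
        = ∑ i ∈ Finset.range ((m + 1) * n), (starRingEnd ℂ) (c (i / n)) * g i :=
      Finset.sum_range_add_sum_Ico _ (by nlinarith)
    rw [← hsplit] at h0
    have e1 : ∑ i ∈ Finset.range n, (starRingEnd ℂ) (c (i / n)) * g i
        = -(starRingEnd ℂ) lam * G n := by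
      rw [hGdef, Finset.mul_sum]
      apply Finset.sum_congr rfl
      intro i hi
      rw [Finset.mem_range] at hi
      rw [Nat.div_eq_of_lt hi]
      simp [hcdef]
    have e2 : ∑ i ∈ Finset.Ico n ((m + 1) * n), (starRingEnd ℂ) (c (i / n)) * g i
        = G ((m + 1) * n) - G n := by
      have : ∑ i ∈ Finset.Ico n ((m + 1) * n), (starRingEnd ℂ) (c (i / n)) * g i
          = ∑ i ∈ Finset.Ico n ((m + 1) * n), g i := by
        apply Finset.sum_congr rfl
        intro i hi
        rw [Finset.mem_Ico] at hi
        have h1 : i / n ≠ 0 := by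
          have := (Nat.le_div_iff_mul_le hn).mpr (by omega : 1 * n ≤ i)
          omega
        have h2 : i / n ≤ m := by
          have := Nat.div_lt_iff_lt_mul (by omega : 0 < n) |>.mpr
            (by omega : i < (m + 1) * n)
          omega
        simp [hcdef, h1, h2]
      rw [this, hGdef]
      rw [Finset.sum_Ico_eq_sub _ (by nlinarith)]
    rw [e1, e2] at h0
    rw [hμdef]
    ring_nf
    ring_nf at h0
    linear_combination h0
  -- Cauchy–Schwarz bound
  have hbound : ∀ n : ℕ, ‖G n‖ ≤ Real.sqrt n * ‖g‖ := by
    intro n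
    have h1 : G n = ⟪(∑ i ∈ Finset.range n, lp.single 2 i (1 : ℂ) : H2), g⟫_ℂ := by
      rw [sum_inner, hGdef]
      simp [lp.inner_single_left, RCLike.inner_apply]
    have h2 : ‖(∑ i ∈ Finset.range n, lp.single 2 i (1 : ℂ) : H2)‖ = Real.sqrt n := by
      have h := lp.norm_sum_single (p := 2) (E := fun _ : ℕ => ℂ) (by norm_num)
        (fun _ => (1 : ℂ)) (Finset.range n)
      simp only [norm_one, Finset.sum_const, Finset.card_range, nsmul_eq_mul, mul_one] at h
      norm_num at h
      rw [← h, Real.sqrt_sq (norm_nonneg _)]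
    calc ‖G n‖ = ‖⟪(∑ i ∈ Finset.range n, lp.single 2 i (1 : ℂ) : H2), g⟫_ℂ‖ := by
          rw [← h1]
      _ ≤ ‖(∑ i ∈ Finset.range n, lp.single 2 i (1 : ℂ) : H2)‖ * ‖g‖ := norm_inner_le_norm _ _
      _ = Real.sqrt n * ‖g‖ := by rw [h2]
  -- iterate the functional equation
  have hiter : ∀ n, 1 ≤ n → ∀ k : ℕ, G ((m + 1) ^ k * n) = μ ^ k * G n := by
    intro n hn k
    induction k with
    | zero => simp
    | succ k ih =>
      have h1 : (m + 1) ^ (k + 1) * n = (m + 1) * ((m + 1) ^ k * n) := by ring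
      have h2 : 1 ≤ (m + 1) ^ k * n := Nat.one_le_iff_ne_zero.mpr (by positivity)
      rw [h1, key _ h2, ih]
      ring
  -- partial sums vanish
  have hG0 : ∀ n, G n = 0 := by
    intro n
    rcases Nat.eq_zero_or_pos n with rfl | hn
    · simp [hGdef]
    have habs : ∀ k : ℕ, ‖G n‖
        ≤ (Real.sqrt (m + 1) / ‖μ‖) ^ k * (Real.sqrt n * ‖g‖) := by
      intro k
      have h1 := hbound ((m + 1) ^ k * n)
      rw [hiter n hn k, norm_mul, norm_pow] at h1
      have h2 : (((m + 1) ^ k * n : ℕ) : ℝ) = ((m : ℝ) + 1) ^ k * n := by push_cast; ring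
      have h4 : ∀ j : ℕ, Real.sqrt (((m : ℝ) + 1) ^ j) = Real.sqrt ((m : ℝ) + 1) ^ j := by
        intro j
        induction j with
        | zero => simp
        | succ j ih => rw [pow_succ, pow_succ, Real.sqrt_mul (by positivity), ih]
      rw [h2, Real.sqrt_mul (by positivity), h4 k] at h1
      have h3 : 0 < ‖μ‖ ^ k := pow_pos hμpos k
      rw [div_pow, div_mul_eq_mul_div, le_div_iff₀ h3]
      calc ‖G n‖ * ‖μ‖ ^ k
            = ‖μ‖ ^ k * ‖G n‖ := by ring
        _ ≤ Real.sqrt ((m : ℝ) + 1) ^ k * (Real.sqrt n * ‖g‖) := by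
            calc ‖μ‖ ^ k * ‖G n‖
                ≤ Real.sqrt ((m : ℝ) + 1) ^ k * Real.sqrt n * ‖g‖ := h1
              _ = Real.sqrt ((m : ℝ) + 1) ^ k * (Real.sqrt n * ‖g‖) := by ring
    have hr : Real.sqrt (m + 1) / ‖μ‖ < 1 := by
      rw [div_lt_one hμpos, hμabs]
      exact_mod_cast hlam
    have hlim : Tendsto (fun k : ℕ =>
        (Real.sqrt (m + 1) / ‖μ‖) ^ k * (Real.sqrt n * ‖g‖)) atTop (nhds 0) := by
      rw [show (0 : ℝ) = 0 * (Real.sqrt n * ‖g‖) by ring]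
      exact (tendsto_pow_atTop_nhds_zero_of_lt_one (by positivity) hr).mul_const _
    have : ‖G n‖ ≤ 0 := ge_of_tendsto' hlim habs
    have := le_antisymm this (norm_nonneg _)
    exact norm_eq_zero.mp this
  -- conclude g = 0
  apply lp.ext; funext i
  have h1 : ∑ j ∈ Finset.range (i + 1), (g : ∀ _, ℂ) j = 0 := hG0 (i + 1)
  have h2 : ∑ j ∈ Finset.range i, (g : ∀ _, ℂ) j = 0 := hG0 i
  rw [Finset.sum_range_succ, h2, zero_add] at h1
  simpa using h1
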